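/- Let V be a finite-dimensional real vector space, let v ∈ V be nonzero, and let γ be a symmetric positive semidefinite bilinear form on V whose radical {w ∈ V : γ(w,x) = 0 for all x ∈ V} equals the span of v. Then there exist a linear functional τ ∈ V* and a symmetric positive semidefinite bilinear form h on V* such that: τ(v) = 1; the radical of h equals the span of τ (in particular h(τ,ξ) = 0 for all ξ ∈ V*); and h♯(γ♭(w)) = w − τ(w)·v for all w ∈ V, where γ♭ : V → V* is w ↦ γ(w,·) and h♯ : V* → V is the linear map determined by ξ(h♯(η)) = h(η,ξ) for all ξ, η ∈ V*. -/

import Mathlib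

/-- Cauchy–Schwarz-type degeneracy: for a symmetric positive semidefinite bilinear form,
a null vector is in the radical. -/
private lemma psd_null_of_diag_zero {V : Type*} [AddCommGroup V] [Module ℝ V]
    (γ : V →ₗ[ℝ] V →ₗ[ℝ] ℝ) (hsym : ∀ w x : V, γ w x = γ x w)
    (hpsd : ∀ w : V, 0 ≤ γ w w) {w : V} (hw : γ w w = 0) (x : V) : γ w x = 0 := by
  by_contra hc
  have hd : 0 ≤ γ x x := hpsd x
  have hsq : 0 < γ w x ^ 2 := (sq_nonneg _).lt_of_ne (Ne.symm (pow_ne_zero 2 hc))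
  have key : ∀ t : ℝ, 0 ≤ 2 * t * γ w x + t ^ 2 * γ x x := by
    intro t
    have e : γ (w + t • x) (w + t • x) = 2 * t * γ w x + t ^ 2 * γ x x := by
      simp only [map_add, map_smul, LinearMap.add_apply, LinearMap.smul_apply,
        smul_eq_mul]
      rw [hw, hsym x w]; ring
    have h0 := hpsd (w + t • x)
    rw [e] at h0
    exact h0
  rcases eq_or_lt_of_le hd with hd0 | hd0
  · have h1 := key (-(γ w x))
    rw [← hd0] at h1
    nlinarith [h1, hsq]
  · have h1 := key (-(γ w x) / γ x x)
    have h3 : (0:ℝ) < γ x x := hd0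
    have h4 : 2 * (-(γ w x) / γ x x) * γ w x + (-(γ w x) / γ x x) ^ 2 * γ x x
        = -(γ w x ^ 2) / γ x x := by
      field_simp; ring
    rw [h4] at h1
    have h5 : -(γ w x ^ 2) / γ x x < 0 := by
      apply div_neg_of_neg_of_pos _ h3; linarith
    linarith

set_option maxHeartbeats 1000000 in
theorem carrollian_has_dual_galilean
    (V : Type*) [AddCommGroup V] [Module ℝ V] [FiniteDimensional ℝ V]
    (v : V) (hv : v ≠ 0)
    (γ : V →ₗ[ℝ] V →ₗ[ℝ] ℝ)
    (hγsym : ∀ w x : V, γ w x = γ x w)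
    (hγpsd : ∀ w : V, 0 ≤ γ w w)
    (hγrad : {w : V | ∀ x : V, γ w x = 0} = (Submodule.span ℝ {v} : Submodule ℝ V)) :
    ∃ (τ : Module.Dual ℝ V)
      (h : Module.Dual ℝ V →ₗ[ℝ] Module.Dual ℝ V →ₗ[ℝ] ℝ),
      τ v = 1 ∧
      (∀ ξ η : Module.Dual ℝ V, h ξ η = h η ξ) ∧
      (∀ ξ : Module.Dual ℝ V, 0 ≤ h ξ ξ) ∧
      ({ξ : Module.Dual ℝ V | ∀ η : Module.Dual ℝ V, h ξ η = 0}
        = (Submodule.span ℝ {τ} : Submodule ℝ (Module.Dual ℝ V))) ∧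
      ∃ hsharp : Module.Dual ℝ V →ₗ[ℝ] V,
        (∀ ξ η : Module.Dual ℝ V, ξ (hsharp η) = h η ξ) ∧
        (∀ w : V, hsharp (γ w) = w - τ w • v) := by
  classical
  -- v is in the radical of γ
  have hvrad : ∀ x : V, γ v x = 0 := by
    have hm : v ∈ {w : V | ∀ x : V, γ w x = 0} := by
      rw [hγrad]; exact Submodule.mem_span_singleton_self v
    exact hm
  -- radical membership criterion
  have hradmem : ∀ {w : V}, (∀ x : V, γ w x = 0) → ∃ c : ℝ, w = c • v := by
    intro w hw
    have hm : w ∈ (↑(Submodule.span ℝ {v} : Submodule ℝ V) : Set V) :=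
      hγrad ▸ (show w ∈ {w : V | ∀ x : V, γ w x = 0} from hw)
    rcases Submodule.mem_span_singleton.mp (SetLike.mem_coe.mp hm) with ⟨c, hc⟩
    exact ⟨c, hc.symm⟩
  -- construct τ with τ v = 1
  obtain ⟨τ, hτv⟩ : ∃ τ : Module.Dual ℝ V, τ v = 1 := by
    have hli : LinearIndepOn ℝ id ({v} : Set V) := .singleton hv
    have hmem : v ∈ hli.extend (Set.subset_univ _) := hli.subset_extend _ rfl
    refine ⟨(Module.Basis.extend hli).coord ⟨v, hmem⟩, ?_⟩
    have hbv : (Module.Basis.extend hli) ⟨v, hmem⟩ = v := Module.Basis.extend_apply_self hli ⟨v, hmem⟩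
    have h1 : (Module.Basis.extend hli).repr ((Module.Basis.extend hli) ⟨v, hmem⟩) ⟨v, hmem⟩ = 1 := by
      rw [Module.Basis.repr_self]
      exact Finsupp.single_eq_same
    rw [hbv] at h1
    rw [Module.Basis.coord_apply]
    exact h1
  set W : Submodule ℝ V := LinearMap.ker τ with hWdef
  -- the projection onto W along v
  have hprojW : ∀ w : V, w - τ w • v ∈ W := by
    intro w
    simp [hWdef, LinearMap.mem_ker, map_sub, map_smul, hτv]
  -- the restricted bilinear map W → Dual W
  set T : W →ₗ[ℝ] Module.Dual ℝ W := W.subtype.dualMap.comp (γ.comp W.subtype) with hTdef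
  have hTapp : ∀ (a x : W), T a x = γ (a : V) (x : V) := fun a x => rfl
  -- a vector of W which is γ-orthogonal to W is zero
  have hWnull : ∀ a : W, (∀ x : W, γ (a : V) (x : V) = 0) → a = 0 := by
    intro a ha
    have hall : ∀ x : V, γ (a : V) x = 0 := by
      intro x
      have hx : x = τ x • v + (x - τ x • v) := by abel
      have h1 : γ (a : V) (x - τ x • v) = 0 := ha ⟨x - τ x • v, hprojW x⟩
      have h2 : γ (a : V) v = 0 := by rw [hγsym]; exact hvrad _
      calc γ (a : V) x = γ (a : V) (τ x • v + (x - τ x • v)) := by rw [← hx]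
        _ = τ x * γ (a : V) v + γ (a : V) (x - τ x • v) := by
            simp [map_add, map_smul]
        _ = 0 := by rw [h2, h1]; ring
    obtain ⟨c, hc⟩ := hradmem hall
    have hτa : τ (a : V) = 0 := a.2
    have : c = 0 := by
      have := hτa
      rw [hc, map_smul, hτv, smul_eq_mul, mul_one] at this
      exact this
    ext
    rw [hc, this, zero_smul]
    rfl
  -- T is bijective
  have hTinj : Function.Injective T := by
    rw [injective_iff_map_eq_zero]
    intro a ha
    apply hWnull
    intro x
    have h1 := LinearMap.congr_fun ha x
    simpa [hTapp] using h1
  have hTbij : Function.Bijective T :=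
    ⟨hTinj, (LinearMap.injective_iff_surjective_of_finrank_eq_finrank
      (Subspace.dual_finrank_eq (V := W)).symm).mp hTinj⟩
  set e : W ≃ₗ[ℝ] Module.Dual ℝ W := LinearEquiv.ofBijective T hTbij with hedef
  -- the sharp map
  set hsharp : Module.Dual ℝ V →ₗ[ℝ] V :=
    W.subtype.comp ((e.symm : Module.Dual ℝ W →ₗ[ℝ] W).comp W.subtype.dualMap) with hsdef
  have hsmem : ∀ η : Module.Dual ℝ V, hsharp η ∈ W := fun η => (e.symm _).2
  -- key property of hsharp
  have hkey : ∀ (η : Module.Dual ℝ V) (x : W), γ (hsharp η) (x : V) = η (x : V) := by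
    intro η x
    have h1 : T (e.symm (W.subtype.dualMap η)) = W.subtype.dualMap η := by
      have := e.apply_symm_apply (W.subtype.dualMap η)
      rwa [hedef, LinearEquiv.ofBijective_apply] at this
    have h2 : γ (hsharp η) (x : V) = T (e.symm (W.subtype.dualMap η)) x := rfl
    rw [h2, h1]
    rfl
  -- define h
  set h : Module.Dual ℝ V →ₗ[ℝ] Module.Dual ℝ V →ₗ[ℝ] ℝ :=
    γ.compl₁₂ hsharp hsharp with hhdef
  have happ : ∀ ξ η : Module.Dual ℝ V, h ξ η = γ (hsharp ξ) (hsharp η) := fun ξ η => rfl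
  -- compatibility
  have hcompat : ∀ w : V, hsharp (γ w) = w - τ w • v := by
    intro w
    have hp : (w - τ w • v) ∈ W := hprojW w
    have h1 : W.subtype.dualMap (γ w) = T ⟨w - τ w • v, hp⟩ := by
      ext x
      have h2 : γ v (x : V) = 0 := hvrad _
      simp only [LinearMap.dualMap_apply, Submodule.coe_subtype, hTapp]
      simp [map_sub, map_smul, h2, LinearMap.sub_apply, LinearMap.smul_apply]
    have h3 : hsharp (γ w) = (e.symm (W.subtype.dualMap (γ w)) : V) := rfl
    rw [h3, h1]
    have h4 : e.symm (T ⟨w - τ w • v, hp⟩) = ⟨w - τ w • v, hp⟩ := by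
      rw [LinearEquiv.symm_apply_eq, hedef, LinearEquiv.ofBijective_apply]
    rw [h4]
  -- hsharp τ = 0
  have hsτ : hsharp τ = 0 := by
    have h1 : W.subtype.dualMap τ = 0 := by
      ext x
      exact x.2
    have h2 : hsharp τ = (e.symm (W.subtype.dualMap τ) : V) := rfl
    rw [h2, h1, map_zero]
    rfl
  refine ⟨τ, h, hτv, ?_, ?_, ?_, hsharp, ?_, hcompat⟩
  · intro ξ η
    rw [happ, happ, hγsym]
  · intro ξ
    rw [happ]
    exact hγpsd _
  · ext ξ
    simp only [Set.mem_setOf_eq, SetLike.mem_coe]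
    constructor
    · intro hξ
      -- hsharp ξ is a null vector of γ in W, hence zero
      have h0 : γ (hsharp ξ) (hsharp ξ) = 0 := by rw [← happ]; exact hξ ξ
      have h1 : ∀ x : V, γ (hsharp ξ) x = 0 :=
        psd_null_of_diag_zero γ hγsym hγpsd h0
      have h2 : (⟨hsharp ξ, hsmem ξ⟩ : W) = 0 := hWnull _ (fun x => h1 _)
      have h3 : hsharp ξ = 0 := congrArg Subtype.val h2
      -- hence ξ restricted to W is zero
      have h4 : ∀ x : W, ξ (x : V) = 0 := by
        intro x
        rw [← hkey ξ x, h3]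
        simp
      -- so ξ = ξ v • τ
      have h5 : ξ = ξ v • τ := by
        ext x
        have h6 : ξ (x - τ x • v) = 0 := h4 ⟨_, hprojW x⟩
        rw [map_sub, map_smul, smul_eq_mul, sub_eq_zero] at h6
        simp only [LinearMap.smul_apply, smul_eq_mul]
        rw [h6]
        ring
      rw [h5]
      exact Submodule.smul_mem _ _ (Submodule.mem_span_singleton_self τ)
    · intro hξ η
      rcases Submodule.mem_span_singleton.mp hξ with ⟨c, hc⟩
      rw [← hc, happ, map_smul, hsτ, smul_zero, map_zero, LinearMap.zero_apply]
  · intro ξ η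
    rw [happ]
    have hη : hsharp η ∈ W := hsmem η
    have h1 := hkey ξ ⟨hsharp η, hη⟩
    rw [hγsym]
    exact h1.symm
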